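/- The derivative of E_s satisfies dE_s/ds = -(g/(8 e_s²))(P_s^+ - P_s^-), and this derivative is Hermitian (equals its own adjoint). -/

import Mathlib

open Matrix

/-- The half-gap `e_s = (1/2)√(s² + g²)`. -/
noncomputable def eLZ (g s : ℝ) : ℝ := (1/2) * Real.sqrt (s^2 + g^2)

/-- The Landau-Zener Hamiltonian `H_s = (1/2)[[s, g],[g, -s]]`. -/
noncomputable def HLZ (g s : ℝ) : Matrix (Fin 2) (Fin 2) ℂ :=
  (1/2 : ℂ) • !![(s : ℂ), (g : ℂ); (g : ℂ), -(s : ℂ)]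

/-- The eigenprojection `P_s⁺` of `H_s` for the eigenvalue `+e_s`. -/
noncomputable def PpLZ (g s : ℝ) : Matrix (Fin 2) (Fin 2) ℂ :=
  (1/2 : ℂ) • (1 + ((eLZ g s : ℝ) : ℂ)⁻¹ • HLZ g s)

/-- The eigenprojection `P_s⁻` of `H_s` for the eigenvalue `-e_s`. -/
noncomputable def PmLZ (g s : ℝ) : Matrix (Fin 2) (Fin 2) ℂ :=
  (1/2 : ℂ) • (1 - ((eLZ g s : ℝ) : ℂ)⁻¹ • HLZ g s)

/-- The (real) coherence `E_s = (1/(4e_s))[[g, -s-2e_s],[-s+2e_s, -g]]`. -/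
noncomputable def ELZ (g s : ℝ) : Matrix (Fin 2) (Fin 2) ℂ :=
  ((4 * eLZ g s : ℝ) : ℂ)⁻¹ •
    !![(g : ℂ), ((-s - 2 * eLZ g s : ℝ) : ℂ); ((-s + 2 * eLZ g s : ℝ) : ℂ), -(g : ℂ)]

attribute [local instance] Matrix.normedAddCommGroup Matrix.normedSpace


private theorem Pdiff_aux (g s : ℝ) : PpLZ g s - PmLZ g s = ((eLZ g s : ℝ) : ℂ)⁻¹ • HLZ g s := by
  unfold PpLZ PmLZ
  module

private theorem eLZ_deriv_aux (g s : ℝ) (hg : 0 < g) :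
    HasDerivAt (fun t => eLZ g t) (s / (4 * eLZ g s)) s := by
  have h0 : s^2 + g^2 ≠ 0 := by positivity
  have h := (Real.hasDerivAt_sqrt h0).comp s (((hasDerivAt_pow 2 s).add_const (g^2)))
  have h2 := h.const_mul (1/2 : ℝ)
  have hs : Real.sqrt (s^2 + g^2) > 0 := Real.sqrt_pos.mpr (by positivity)
  refine h2.congr_deriv ?_
  symm
  unfold eLZ
  field_simp
  ring

private theorem eLZ_pos_aux (g s : ℝ) (hg : 0 < g) : 0 < eLZ g s := by
  have : Real.sqrt (s^2 + g^2) > 0 := Real.sqrt_pos.mpr (by positivity)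
  unfold eLZ; linarith

private theorem eLZ_sq_aux (g s : ℝ) (hg : 0 < g) : 4 * (eLZ g s)^2 = s^2 + g^2 := by
  unfold eLZ
  rw [mul_pow, Real.sq_sqrt (by positivity)]
  ring

set_option maxHeartbeats 1600000 in
/-- `dE_s/ds = -(g/(8 e_s²))(P_s⁺ - P_s⁻)`, and this derivative is Hermitian. -/
theorem deriv_ELZ (g s : ℝ) (hg : 0 < g) :
    HasDerivAt (fun t : ℝ => ELZ g t)
      (-(((g / (8 * (eLZ g s)^2) : ℝ) : ℂ) • (PpLZ g s - PmLZ g s))) s ∧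
    (-(((g / (8 * (eLZ g s)^2) : ℝ) : ℂ) • (PpLZ g s - PmLZ g s)))ᴴ
      = -(((g / (8 * (eLZ g s)^2) : ℝ) : ℂ) • (PpLZ g s - PmLZ g s)) := by
  constructor
  · have he := eLZ_pos_aux g s hg
    have hE := eLZ_deriv_aux g s hg
    set e := eLZ g s with hedef
    have h4 : (4 * e : ℝ) ≠ 0 := by positivity
    have hc : HasDerivAt (fun t : ℝ => (((4 * eLZ g t)⁻¹ : ℝ) : ℂ))
        (((-(4 * (s / (4 * e))) / (4*e)^2 : ℝ) : ℂ)) s :=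
      ((hE.const_mul 4).inv h4).ofReal_comp
    have hx : HasDerivAt (fun t : ℝ => ((-t - 2 * eLZ g t : ℝ) : ℂ))
        ((-1 - 2 * (s / (4 * e)) : ℝ) : ℂ) s :=
      ((hasDerivAt_id s).neg.sub (hE.const_mul 2)).ofReal_comp
    have hy : HasDerivAt (fun t : ℝ => ((-t + 2 * eLZ g t : ℝ) : ℂ))
        ((-1 + 2 * (s / (4 * e)) : ℝ) : ℂ) s :=
      ((hasDerivAt_id s).neg.add (hE.const_mul 2)).ofReal_comp
    have hM : HasDerivAt (fun t : ℝ =>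
          ((-t - 2 * eLZ g t : ℝ) : ℂ) • !![0,1;0,0] + ((-t + 2 * eLZ g t : ℝ) : ℂ) • !![0,0;1,0]
            + !![(g : ℂ),0;0,-(g : ℂ)])
        (((-1 - 2 * (s / (4 * e)) : ℝ) : ℂ) • !![0,1;0,0]
          + ((-1 + 2 * (s / (4 * e)) : ℝ) : ℂ) • !![0,0;1,0]) s :=
      ((hx.smul_const _).add (hy.smul_const _)).add_const _
    have hcM := hc.smul hM
    have hfun : (fun t : ℝ => ELZ g t) = fun t : ℝ => (((4 * eLZ g t)⁻¹ : ℝ) : ℂ) •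
        (((-t - 2 * eLZ g t : ℝ) : ℂ) • !![0,1;0,0] + ((-t + 2 * eLZ g t : ℝ) : ℂ) • !![0,0;1,0]
          + !![(g : ℂ),0;0,-(g : ℂ)]) := by
      funext t
      unfold ELZ
      push_cast
      ext i j
      fin_cases i <;> fin_cases j <;> simp
    rw [hfun]
    refine hcM.congr_deriv ?_
    symm
    rw [Pdiff_aux]
    unfold HLZ
    have hsq : 4 * e^2 = s^2 + g^2 := eLZ_sq_aux g s hg
    have hene : (e : ℂ) ≠ 0 := by exact_mod_cast he.ne'
    rw [hedef] at hene ⊢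
    ext i j
    have hsqC : (g:ℂ)^2 = 4*((eLZ g s : ℝ):ℂ)^2 - (s:ℂ)^2 := by
      exact_mod_cast congrArg (Complex.ofReal) (by linarith : (g:ℝ)^2 = 4*e^2 - s^2)
    fin_cases i <;> fin_cases j <;>
      · simp [Matrix.smul_apply, Matrix.add_apply]
        push_cast
        field_simp
        ring_nf
        try linear_combination (-(16:ℂ)) * hsqC
  · rw [Pdiff_aux]
    unfold HLZ
    ext i j
    fin_cases i <;> fin_cases j <;>
      simp [Matrix.conjTranspose_apply, Matrix.smul_apply, Complex.conj_ofReal]
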